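/- arXiv:2205.03933 — 2 statements merged into one kernel-verified Lean document; each statement's English description precedes it below -/
import Mathlib

section
/- Let Σ be a finite alphabet of size q ≥ 2 and let n, L_min, L_over be positive integers with n ≥ L_min > L_over ≥ 1. If x ∈ rf_{L_over}(n) is an L_over-repeat-free string and y ∈ Σ^n is any string such that T_{L_min}^{L_over}(x) ∩ T_{L_min}^{L_over}(y) ≠ ∅ (i.e., some multiset is simultaneously an (L_min, L_over)-trace of x and of y), then x = y. In other words, any L_over-repeat-free string is uniquely reconstructible from any single (L_min, L_over)-trace of it. -/
/-- The `ℓ`-substring of `x` at location `i`: `(x_i, x_{i+1}, …, x_{i+ℓ-1})`. -/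
def substr {α : Type*} (x : List α) (i ℓ : ℕ) : List α := (x.drop i).take ℓ

/-- `x` is `ℓ`-repeat-free: no `ℓ`-substring occurs at two distinct locations. -/
def RepeatFree {α : Type*} (ℓ : ℕ) (x : List α) : Prop :=
  ∀ i j : ℕ, i < j → j + ℓ ≤ x.length → substr x i ℓ ≠ substr x j ℓ

/-- `T` is an `(Lmin, Lover)`-trace of `x`: a multiset of substrings of `x` taken at
strictly increasing locations, starting at location `0`, ending flush with the end of `x`,
each of length at least `Lmin`, and with consecutive substrings overlapping in at least
`Lover` positions. -/
def IsTrace {α : Type*} (Lmin Lover : ℕ) (x : List α) (T : Multiset (List α)) : Prop :=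
  ∃ P : List (ℕ × ℕ),
    P ≠ [] ∧
    (∀ p ∈ P, Lmin ≤ p.2 ∧ p.1 + p.2 ≤ x.length) ∧
    P.Chain' (fun a b => a.1 < b.1 ∧ b.1 + Lover ≤ a.1 + a.2) ∧
    (∃ p ∈ P.head?, p.1 = 0) ∧
    (∃ p ∈ P.getLast?, p.1 + p.2 = x.length) ∧
    T = ↑(P.map fun p => substr x p.1 p.2)

/-- The `(Lmin, Lover)`-trace spectrum of `x`: the set of all its `(Lmin, Lover)`-traces. -/
def traceSpectrum {α : Type*} (Lmin Lover : ℕ) (x : List α) : Set (Multiset (List α)) :=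
  {T | IsTrace Lmin Lover x T}

lemma substr_length {α : Type*} (x : List α) (i ℓ : ℕ) (h : i + ℓ ≤ x.length) :
    (substr x i ℓ).length = ℓ := by
  simp [substr]; omega

lemma substr_drop_take {α : Type*} (x : List α) (i ℓ d L : ℕ) (h : d + L ≤ ℓ) :
    ((substr x i ℓ).drop d).take L = substr x (i + d) L := by
  simp [substr, List.drop_take, List.drop_drop, List.take_take]
  omega

lemma substr_take {α : Type*} (x : List α) (i ℓ L : ℕ) (h : L ≤ ℓ) :
    (substr x i ℓ).take L = substr x i L := by
  have := substr_drop_take x i ℓ 0 L (by omega)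
  simpa using this

lemma substr_getElem {α : Type*} (x : List α) (i ℓ t : ℕ) (h1 : i ≤ t) (h2 : t - i < ℓ)
    (h3 : t < x.length) :
    (substr x i ℓ)[t - i]'(by simp [substr]; omega) = x[t]'h3 := by
  simp [substr]
  congr 1
  omega

lemma occ_unique {α : Type*} {L : ℕ} {x : List α} (hrf : RepeatFree L x)
    {i j : ℕ} (hi : i + L ≤ x.length) (hj : j + L ≤ x.length)
    (h : substr x i L = substr x j L) : i = j := by
  rcases lt_trichotomy i j with h' | h' | h'
  · exact absurd h (hrf i j h' hj)
  · exact h'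
  · exact absurd h.symm (hrf j i h' hi)

lemma chain_offset {α : Type*} {Lmin Lover n : ℕ} {x y : List α}
    (hx : x.length = n) (hy : y.length = n)
    (hrf : RepeatFree Lover x) (hLmin : Lover < Lmin)
    (f : ℕ × ℕ → ℕ) :
    ∀ (Q : List (ℕ × ℕ)) (c : ℕ),
      (∀ p ∈ Q, Lmin ≤ p.2 ∧ p.1 + p.2 ≤ n) →
      Q.Chain' (fun a b => a.1 < b.1 ∧ b.1 + Lover ≤ a.1 + a.2) →
      (∀ p ∈ Q, substr y p.1 p.2 = substr x (f p) p.2 ∧ f p + p.2 ≤ n) →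
      (∀ p ∈ Q.head?, f p = p.1 + c) →
      ∀ p ∈ Q, f p = p.1 + c := by
  intro Q
  induction Q with
  | nil => intro c _ _ _ _ p hp; cases hp
  | cons a Q ih =>
    intro c hcond hchain hf hhead p hp
    have ha : f a = a.1 + c := hhead a rfl
    rcases List.mem_cons.mp hp with rfl | hp
    · exact ha
    cases Q with
    | nil => cases hp
    | cons b Q' =>
      obtain ⟨⟨hab1, hab2⟩, hchain'⟩ := List.isChain_cons_cons.mp hchain
      -- establish f b = b.1 + c
      have hb : f b = b.1 + c := by
        set d := b.1 - a.1 with hd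
        have hd1 : a.1 + d = b.1 := by omega
        have hdl : d + Lover ≤ a.2 := by omega
        have e1 : substr y b.1 Lover = substr x (f a + d) Lover := by
          have := congrArg (fun l => (l.drop d).take Lover)
            (hf a (by simp)).1
          simpa [substr_drop_take _ _ _ _ _ hdl, hd1] using this
        have e2 : substr y b.1 Lover = substr x (f b) Lover := by
          have := congrArg (fun l => l.take Lover)
            (hf b (by simp)).1
          have hL : Lover ≤ b.2 := le_of_lt (lt_of_lt_of_le hLmin (hcond b (by simp)).1)
          simpa [substr_take _ _ _ _ hL] using this
        have := occ_unique hrf (i := f a + d) (j := f b)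
          (by have := (hf a (by simp)).2; omega)
          (by have := (hf b (by simp)).2
              have hL : Lover ≤ b.2 := le_of_lt (lt_of_lt_of_le hLmin (hcond b (by simp)).1)
              omega)
          (e1.symm.trans e2)
        omega
      exact ih c (fun p hp => hcond p (by simp [hp]))
        hchain' (fun p hp => hf p (by simp [hp]))
        (fun p hp => by simp at hp; subst hp; exact hb) p hp

lemma coverage : ∀ (Q : List (ℕ × ℕ)) (t : ℕ), Q ≠ [] →
    Q.Chain' (fun a b => b.1 ≤ a.1 + a.2) →
    (∀ p ∈ Q.head?, p.1 ≤ t) →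
    (∀ p ∈ Q.getLast?, t < p.1 + p.2) →
    ∃ p ∈ Q, p.1 ≤ t ∧ t < p.1 + p.2 := by
  intro Q
  induction Q with
  | nil => intro t h; exact absurd rfl h
  | cons a Q ih =>
    intro t _ hchain hhead hlast
    cases Q with
    | nil =>
      exact ⟨a, by simp, hhead a rfl, hlast a (by simp [List.getLast?])⟩
    | cons b Q' =>
      obtain ⟨hab, hchain'⟩ := List.isChain_cons_cons.mp hchain
      by_cases h : t < a.1 + a.2
      · exact ⟨a, by simp, hhead a rfl, h⟩
      · obtain ⟨p, hp, h1, h2⟩ := ih t (by simp) hchain'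
          (fun p hp => by simp at hp; subst hp; omega)
          (fun p hp => hlast p (by rwa [List.getLast?_cons_cons]))
        exact ⟨p, by simp [hp], h1, h2⟩

theorem repeat_free_unique_reconstruction
    {α : Type*} [Fintype α] {q : ℕ} (hcard : Fintype.card α = q) (hq : 2 ≤ q)
    (n Lmin Lover : ℕ) (hn : Lmin ≤ n) (hLmin : Lover < Lmin) (hLover : 1 ≤ Lover)
    (x y : List α) (hx : x.length = n) (hy : y.length = n)
    (hrf : RepeatFree Lover x)
    (T : Multiset (List α))
    (hTx : T ∈ traceSpectrum Lmin Lover x) (hTy : T ∈ traceSpectrum Lmin Lover y) :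
    x = y := by
  obtain ⟨P, hPne, hPcond, hPchain, hPhead, hPlast, hTP⟩ := hTx
  obtain ⟨Q, hQne, hQcond, hQchain, ⟨q0, hq0mem, hq0⟩, ⟨qL, hqLmem, hqL⟩, hTQ⟩ := hTy
  rw [hx] at hPcond
  rw [hy] at hQcond hqL
  classical
  -- occurrence function
  set f : ℕ × ℕ → ℕ := fun p =>
    if h : ∃ r, substr y p.1 p.2 = substr x r p.2 ∧ r + p.2 ≤ n then h.choose else 0 with hfdef
  have hf : ∀ p ∈ Q, substr y p.1 p.2 = substr x (f p) p.2 ∧ f p + p.2 ≤ n := by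
    intro p hp
    have hex : ∃ r, substr y p.1 p.2 = substr x r p.2 ∧ r + p.2 ≤ n := by
      have hmem : substr y p.1 p.2 ∈ (Q.map fun p => substr y p.1 p.2) :=
        List.mem_map.mpr ⟨p, hp, rfl⟩
      have : substr y p.1 p.2 ∈ (P.map fun p => substr x p.1 p.2) := by
        have : (↑(Q.map fun p => substr y p.1 p.2) : Multiset (List α))
            = ↑(P.map fun p => substr x p.1 p.2) := by rw [← hTQ, ← hTP]
        exact Multiset.mem_coe.mp (this ▸ Multiset.mem_coe.mpr hmem)
      obtain ⟨r, hr, heq⟩ := List.mem_map.mp this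
      have hlen : r.2 = p.2 := by
        have h1 := substr_length x r.1 r.2 (by rw [hx]; exact (hPcond r hr).2)
        have h2 := substr_length y p.1 p.2 (by rw [hy]; exact (hQcond p hp).2)
        rw [← heq] at h2
        omega
      refine ⟨r.1, by rw [← heq, hlen], ?_⟩
      rw [← hlen]; exact (hPcond r hr).2
    rw [hfdef]
    simp only [dif_pos hex]
    exact hex.choose_spec
  -- offset
  have hq0some : Q.head? = some q0 := hq0mem
  have hq0Q : q0 ∈ Q := List.mem_of_mem_head? hq0mem
  have hhead : ∀ p ∈ Q.head?, f p = p.1 + f q0 := by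
    intro p hp
    have : p = q0 := by
      have h1 : Q.head? = some p := hp
      rw [hq0some] at h1
      exact (Option.some_inj.mp h1).symm
    subst this
    omega
  have hoff := chain_offset hx hy hrf hLmin f Q (f q0) hQcond hQchain hf hhead
  -- offset is zero
  have hqLQ : qL ∈ Q := List.mem_of_mem_getLast? hqLmem
  have hc0 : f q0 = 0 := by
    have h1 := hoff qL hqLQ
    have h2 := (hf qL hqLQ).2
    omega
  have hsub : ∀ p ∈ Q, substr y p.1 p.2 = substr x p.1 p.2 := by
    intro p hp
    have := (hf p hp).1
    rw [hoff p hp, hc0] at this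
    simpa using this
  -- extensionality
  apply List.ext_getElem (by omega)
  intro t ht1 ht2
  have htn : t < n := by omega
  obtain ⟨p, hp, hpt1, hpt2⟩ := coverage Q t hQne
    (hQchain.imp (fun a b hab => by omega))
    (fun p hp => by
      have h1 : Q.head? = some p := hp
      rw [hq0some] at h1
      have : p = q0 := (Option.some_inj.mp h1).symm
      subst this
      omega)
    (fun p hp => by
      have h1 : Q.getLast? = some p := hp
      have h2 : Q.getLast? = some qL := hqLmem
      rw [h2] at h1
      have : p = qL := (Option.some_inj.mp h1).symm
      subst this; omega)
  have hpq := hsub p hp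
  have e1 := substr_getElem y p.1 p.2 t hpt1 (by omega) (by omega)
  have e2 := substr_getElem x p.1 p.2 t hpt1 (by omega) (by omega)
  simp only [hpq] at e1
  exact e2.symm.trans e1
end

section
/- Let Σ be a finite alphabet of size q ≥ 2, and let n, L_min, L_over be positive integers with n ≥ L_min > L_over ≥ 1 and (L_min − L_over) dividing (n − L_min). Then every (L_min, L_over)-trace code C ⊆ Σ^n satisfies |C| ≤ binom(⌈n/(L_min − L_over)⌉ + q^{L_min}, q^{L_min}). -/
/-- `C` is an `(Lmin, Lover)`-trace code: distinct codewords have disjoint trace spectra. -/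
def IsTraceCode {α : Type*} (Lmin Lover : ℕ) (C : Set (List α)) : Prop :=
  ∀ x₁ ∈ C, ∀ x₂ ∈ C, x₁ ≠ x₂ →
    traceSpectrum Lmin Lover x₁ ∩ traceSpectrum Lmin Lover x₂ = ∅

lemma substr_eq_ofFn {α : Type*} (a : α) (x : List α) (i ℓ : ℕ) (h : i + ℓ ≤ x.length) :
    substr x i ℓ = List.ofFn (fun j : Fin ℓ => x.getD (i + j) a) := by
  apply List.ext_getElem
  · simp [substr]; omega
  · intro k h1 h2
    have hlt : i + k < x.length := by
      simp [substr] at h1; omega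
    simp only [substr, List.getElem_take, List.getElem_drop, List.getElem_ofFn,
      List.getD_eq_getElem _ _ hlt]

lemma isTrace_canonical {α : Type*} {Lmin Lover d m n : ℕ} (x : List α) (hx : x.length = n)
    (hd : d = Lmin - Lover) (hLm : Lover < Lmin) (hmn : n = Lmin + d * m) :
    IsTrace Lmin Lover x ↑((List.range (m+1)).map (fun i => substr x (i*d) Lmin)) := by
  have hd1 : 1 ≤ d := by omega
  refine ⟨(List.range (m+1)).map (fun i => (i*d, Lmin)), by simp, ?_, ?_, ?_, ?_, ?_⟩
  · intro p hp
    simp only [List.mem_map, List.mem_range] at hp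
    obtain ⟨i, hi, rfl⟩ := hp
    refine ⟨le_refl _, ?_⟩
    have : i * d ≤ m * d := Nat.mul_le_mul_right d (by omega)
    have hdm : d * m = m * d := Nat.mul_comm d m
    simp only [hx]
    omega
  · rw [List.Chain', List.isChain_map, List.isChain_range_succ]
    intro i hi
    simp only [Nat.succ_mul]
    omega
  · refine ⟨(0, Lmin), ?_, rfl⟩
    simp [List.range_succ_eq_map, List.head?_map]
  · refine ⟨(m*d, Lmin), ?_, ?_⟩
    · rw [List.range_succ, List.map_append]
      simp
    · have hdm : d * m = m * d := Nat.mul_comm d m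
      omega
  · simp only [List.map_map]; rfl

lemma count_aux {N K m : ℕ} (hN : 1 ≤ N) (hK : m + 1 ≤ K) :
    Nat.multichoose N (m+1) ≤ (K + N).choose N := by
  obtain ⟨N', rfl⟩ := Nat.exists_eq_add_of_le hN
  rw [Nat.multichoose_eq]
  have h1 : (1 + N' + (m + 1) - 1) = N' + m + 1 := by omega
  rw [h1]
  have h2 : (N' + m + 1).choose (m + 1) = (N' + m + 1).choose N' := by
    rw [← Nat.choose_symm (by omega : m + 1 ≤ N' + m + 1)]
    congr 1
    omega
  rw [h2]
  calc (N' + m + 1).choose N' ≤ (K + N').choose N' :=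
        Nat.choose_le_choose N' (by omega)
    _ ≤ (K + N' + 1).choose (N' + 1) := by
        rw [Nat.choose_succ_succ]
        exact Nat.le_add_right _ _
    _ = (K + (1 + N')).choose (1 + N') := by congr 1 <;> omega

theorem trace_code_size_bound
    {α : Type*} [Fintype α] {q : ℕ} (hcard : Fintype.card α = q) (hq : 2 ≤ q)
    (n Lmin Lover : ℕ) (hn : Lmin ≤ n) (hLmin : Lover < Lmin) (hLover : 1 ≤ Lover)
    (hdvd : (Lmin - Lover) ∣ (n - Lmin))
    (C : Finset (List α)) (hlen : ∀ x ∈ C, x.length = n)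
    (hcode : IsTraceCode Lmin Lover (↑C : Set (List α))) :
    C.card ≤ Nat.choose ((n + (Lmin - Lover) - 1) / (Lmin - Lover) + q ^ Lmin) (q ^ Lmin) := by
  classical
  set d := Lmin - Lover with hd
  have hd1 : 1 ≤ d := by omega
  obtain ⟨m, hm⟩ := hdvd
  have hmn : n = Lmin + d * m := by omega
  have hNa : Nonempty α := by
    rw [← Fintype.card_pos_iff]; omega
  obtain ⟨a⟩ := hNa
  -- the map to Sym
  set g : List α → Sym (Fin Lmin → α) (m+1) :=
    fun x => ⟨((List.range (m+1)).map (fun i (j : Fin Lmin) => x.getD (i*d + j) a) : List _),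
      by simp⟩ with hg
  -- g recovers the canonical trace
  have hrec : ∀ x ∈ C, Multiset.map (fun f : Fin Lmin → α => List.ofFn f) (g x).1
      = ↑((List.range (m+1)).map (fun i => substr x (i*d) Lmin)) := by
    intro x hx
    simp only [hg]
    rw [Multiset.map_coe, List.map_map]
    congr 1
    apply List.map_congr_left
    intro i hi
    simp only [List.mem_range] at hi
    have hle : i * d + Lmin ≤ x.length := by
      have : i * d ≤ m * d := Nat.mul_le_mul_right d (by omega)
      have hdm : d * m = m * d := Nat.mul_comm d m
      rw [hlen x hx]
      omega
    exact (substr_eq_ofFn a x (i*d) Lmin hle).symm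
  -- injectivity on C
  have hinj : Set.InjOn g ↑C := by
    intro x₁ h₁ x₂ h₂ hgeq
    by_contra hne
    have hT : (↑((List.range (m+1)).map (fun i => substr x₁ (i*d) Lmin)) : Multiset (List α))
        = ↑((List.range (m+1)).map (fun i => substr x₂ (i*d) Lmin)) := by
      rw [← hrec x₁ h₁, ← hrec x₂ h₂, hgeq]
    have hmem₁ : (↑((List.range (m+1)).map (fun i => substr x₁ (i*d) Lmin)) : Multiset (List α))
        ∈ traceSpectrum Lmin Lover x₁ :=
      isTrace_canonical x₁ (hlen x₁ h₁) hd hLmin hmn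
    have hmem₂ : (↑((List.range (m+1)).map (fun i => substr x₁ (i*d) Lmin)) : Multiset (List α))
        ∈ traceSpectrum Lmin Lover x₂ := by
      rw [hT]
      exact isTrace_canonical x₂ (hlen x₂ h₂) hd hLmin hmn
    have := hcode x₁ h₁ x₂ h₂ hne
    have : (↑((List.range (m+1)).map (fun i => substr x₁ (i*d) Lmin)) : Multiset (List α))
        ∈ (∅ : Set (Multiset (List α))) := this ▸ ⟨hmem₁, hmem₂⟩
    exact this
  -- cardinality bound
  have hcardle : C.card ≤ Fintype.card (Sym (Fin Lmin → α) (m+1)) := by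
    rw [← Finset.card_univ]
    exact Finset.card_le_card_of_injOn g (fun _ _ => Finset.mem_univ _) hinj
  have hNcard : Fintype.card (Fin Lmin → α) = q ^ Lmin := by
    simp [hcard]
  rw [Sym.card_sym_eq_multichoose, hNcard] at hcardle
  refine hcardle.trans (count_aux ?_ ?_)
  · exact Nat.one_le_two_pow.trans (Nat.pow_le_pow_left hq Lmin)
  · rw [Nat.le_div_iff_mul_le (by omega : 0 < d)]
    have hdm : d * m = m * d := Nat.mul_comm d m
    have : (m + 1) * d = m * d + d := by ring
    omega
end
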